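/- Let Γ be a finite set of d×d matrices over Z_max with entries in {0, -∞}, and let Γ' be obtained by replacing every -∞ entry by -1. Then ρ(Γ) = 0 if and only if ρ(Γ') = 0; moreover if ρ(Γ) ≠ 0 then ρ(Γ) = -∞ and ρ(Γ') < 0. -/

import Mathlib

open Filter

/-- The tropical (max-plus) semiring ℤ ∪ {-∞}: addition is max (lattice sup),
`+` is the tropical product with `⊥` absorbing. -/
abbrev Zmax : Type := WithBot ℤ

/-- Square matrices over `Zmax`. -/
abbrev Mat (d : ℕ) : Type := Fin d → Fin d → Zmax

/-- Tropical matrix product: `(A⊗B) i j = max_k (A i k + B k j)`. -/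
def tmul {d : ℕ} (A B : Mat d) : Mat d :=
  fun i j => Finset.univ.sup fun k => A i k + B k j

/-- Maximal entry of a matrix (`-∞` for the all-`⊥` matrix). -/
def tnorm {d : ℕ} (M : Mat d) : Zmax :=
  Finset.univ.sup fun i => Finset.univ.sup fun j => M i j

/-- Product of a list of matrices (junk value, the all-`⊥` matrix, on `[]`;
only used on nonempty lists). -/
def prodL {d : ℕ} : List (Mat d) → Mat d
  | [] => fun _ _ => ⊥
  | [M] => M
  | M :: N :: L => tmul M (prodL (N :: L))

/-- Tropical identity matrix. -/
def tId (d : ℕ) : Mat d := fun i j => if i = j then (0 : Zmax) else ⊥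

/-- Tropical matrix power. -/
def tpow {d : ℕ} (M : Mat d) : ℕ → Mat d
  | 0 => tId d
  | n+1 => tmul M (tpow M n)

/-- The subsemigroup generated by a set of matrices: all nonempty finite products. -/
def semi {d : ℕ} (Γ : Set (Mat d)) : Set (Mat d) :=
  {M | ∃ L : List (Mat d), L ≠ [] ∧ (∀ N ∈ L, N ∈ Γ) ∧ prodL L = M}

/-- Embedding of `Zmax = ℤ ∪ {-∞}` into `EReal`. -/
noncomputable def z2e (x : Zmax) : EReal :=
  WithBot.recBotCoe ⊥ (fun n : ℤ => ((n : ℝ) : EReal)) x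

/-- `minNorm Γ ℓ` is the minimum over all products of `ℓ` matrices from `Γ`
of `‖M₁⋯M_ℓ‖_∞ / ℓ`, as an extended real. -/
noncomputable def minNorm {d : ℕ} (Γ : Set (Mat d)) (ℓ : ℕ) : EReal :=
  sInf {x | ∃ L : List (Mat d), L.length = ℓ ∧ (∀ N ∈ L, N ∈ Γ) ∧
    x = z2e (tnorm (prodL L)) / (ℓ : EReal)}

/-- Joint spectral radius: `inf_{ℓ>0} min{ ‖M₁⋯M_ℓ‖_∞/ℓ : Mᵢ ∈ Γ }`. -/
noncomputable def jsr {d : ℕ} (Γ : Set (Mat d)) : EReal :=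
  ⨅ (ℓ : ℕ) (_ : 0 < ℓ), minNorm Γ ℓ

/-- Weight of the cycle `c 0 → c 1 → ⋯ → c ℓ → c 0` (length `ℓ+1`),
addition of `Fin (ℓ+1)` being cyclic. -/
def cycWeight {d : ℕ} (M : Mat d) {ℓ : ℕ} (c : Fin (ℓ+1) → Fin d) : Zmax :=
  ∑ k : Fin (ℓ+1), M (c k) (c (k+1))

/-- Tropical spectral radius of a single matrix: the maximal average weight of
cycles in the graph of `M` (and `-∞` if there is no cycle of finite weight). -/
noncomputable def rho {d : ℕ} (M : Mat d) : EReal :=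
  ⨆ (ℓ : ℕ) (c : Fin (ℓ+1) → Fin d), z2e (cycWeight M c) / ((ℓ+1 : ℕ) : EReal)

/-- A critical cycle: a cycle with finite weight whose average weight is `rho M`. -/
def IsCritCycle {d : ℕ} (M : Mat d) {ℓ : ℕ} (c : Fin (ℓ+1) → Fin d) : Prop :=
  cycWeight M c ≠ ⊥ ∧ z2e (cycWeight M c) / ((ℓ+1 : ℕ) : EReal) = rho M

/-- Edges of the critical graph: edges lying on some critical cycle. -/
def critEdge {d : ℕ} (M : Mat d) (i j : Fin d) : Prop :=
  ∃ (ℓ : ℕ) (c : Fin (ℓ+1) → Fin d) (k : Fin (ℓ+1)),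
    IsCritCycle M c ∧ c k = i ∧ c (k+1) = j

/-- Vertices of the critical graph. -/
def critVertex {d : ℕ} (M : Mat d) (i : Fin d) : Prop :=
  ∃ j, critEdge M i j ∨ critEdge M j i

/-- Strongly connected components of the critical graph: maximal sets of critical
vertices that are pairwise connected by paths in the critical graph. -/
def IsSCC {d : ℕ} (M : Mat d) (S : Set (Fin d)) : Prop :=
  (∀ i ∈ S, critVertex M i) ∧
  (∀ i ∈ S, ∀ j ∈ S, Relation.ReflTransGen (critEdge M) i j) ∧
  (∀ T : Set (Fin d), S ⊆ T → (∀ i ∈ T, critVertex M i) →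
    (∀ i ∈ T, ∀ j ∈ T, Relation.ReflTransGen (critEdge M) i j) → T = S)

/-- Greatest common divisor of a set of natural numbers. -/
noncomputable def setGcd (A : Set ℕ) : ℕ :=
  sInf {g | (∀ a ∈ A, g ∣ a) ∧ ∀ h, (∀ a ∈ A, h ∣ a) → h ∣ g}

/-- Cyclicity of a strongly connected component `S` of the critical graph of `M`:
the gcd of the lengths of the cycles of the critical graph lying in `S`. -/
noncomputable def cyclicity {d : ℕ} (M : Mat d) (S : Set (Fin d)) : ℕ :=
  setGcd {n | ∃ (ℓ : ℕ) (c : Fin (ℓ+1) → Fin d), n = ℓ + 1 ∧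
    (∀ k, critEdge M (c k) (c (k+1))) ∧ (∀ k, c k ∈ S)}

/-- Ultimate rank of a matrix: the sum of the cyclicities of the strongly
connected components of its critical graph. -/
noncomputable def urk {d : ℕ} (M : Mat d) : ℕ :=
  ∑ᶠ (S : Set (Fin d)) (_ : IsSCC M S), cyclicity M S

/-- `k ⊙ M`: add the integer `k` to every entry. -/
def kadd {d : ℕ} (k : ℤ) (M : Mat d) : Mat d := fun i j => (k : Zmax) + M i j

/-- Value `I M F` computed from an initial row vector, a matrix and a final
column vector. -/
def runVal {d : ℕ} (I : Fin d → Zmax) (M : Mat d) (F : Fin d → Zmax) : Zmax :=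
  Finset.univ.sup fun i => Finset.univ.sup fun j => I i + M i j + F j

/-! ### Auxiliary lemmas for `stmt_17` -/

/-- The map replacing `⊥` entries by `-1`. -/
abbrev fmap17 {d : ℕ} (M : Mat d) : Mat d :=
  fun i j => if M i j = ⊥ then ((-1 : ℤ) : Zmax) else M i j

lemma zmax_le_neg_one {x : Zmax} (h1 : x ≤ 0) (h2 : x ≠ 0) : x ≤ ((-1 : ℤ) : Zmax) := by
  induction x using WithBot.recBotCoe with
  | bot => exact bot_le
  | coe n =>
    have hn : n ≤ 0 := by exact_mod_cast h1
    have hn0 : n ≠ 0 := by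
      rintro rfl; exact h2 (by exact_mod_cast rfl)
    exact_mod_cast (by omega : n ≤ -1)

lemma zmax_add_eq_zero_iff {a b : Zmax} (ha : a ≤ 0) (hb : b ≤ 0) :
    a + b = 0 ↔ a = 0 ∧ b = 0 := by
  induction a using WithBot.recBotCoe with
  | bot => simp
  | coe m =>
    induction b using WithBot.recBotCoe with
    | bot => simp
    | coe n =>
      have hm : m ≤ 0 := by exact_mod_cast ha
      have hn : n ≤ 0 := by exact_mod_cast hb
      constructor
      · intro h
        have : m + n = 0 := by exact_mod_cast h
        constructor <;> [skip; skip] <;>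
          · exact_mod_cast (by omega : _ = (0:ℤ))
      · rintro ⟨h1, h2⟩
        rw [h1, h2, add_zero]

lemma sup_zmax_eq_zero_iff {ι : Type*} {s : Finset ι} {g : ι → Zmax}
    (h : ∀ k ∈ s, g k ≤ 0) : s.sup g = 0 ↔ ∃ k ∈ s, g k = 0 := by
  constructor
  · intro h0
    have hs : s.Nonempty := by
      rcases s.eq_empty_or_nonempty with rfl | hs
      · rw [Finset.sup_empty] at h0; exact absurd h0 (by simp)
      · exact hs
    obtain ⟨k, hk, hek⟩ := s.exists_mem_eq_sup hs g
    exact ⟨k, hk, by rw [← hek, h0]⟩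
  · rintro ⟨k, hk, hgk⟩
    exact le_antisymm (Finset.sup_le h) (hgk ▸ Finset.le_sup hk)

/-- The relation between a `{0,⊥}`-matrix product and its `-1`-perturbed product. -/
def Rel17 {d : ℕ} (A A' : Mat d) : Prop :=
  ∀ i j, (A i j = 0 ∨ A i j = ⊥) ∧ A' i j ≤ 0 ∧ (A i j = 0 ↔ A' i j = 0)

lemma rel_base {d : ℕ} {M : Mat d} (h : ∀ i j, M i j = 0 ∨ M i j = ⊥) :
    Rel17 M (fmap17 M) := by
  intro i j
  rcases h i j with h0 | hb
  · have hne : M i j ≠ ⊥ := by rw [h0]; simp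
    refine ⟨Or.inl h0, ?_, ?_⟩
    · show (if M i j = ⊥ then ((-1 : ℤ) : Zmax) else M i j) ≤ 0
      rw [if_neg hne, h0]
    · show M i j = 0 ↔ (if M i j = ⊥ then ((-1 : ℤ) : Zmax) else M i j) = 0
      rw [if_neg hne]
  · refine ⟨Or.inr hb, ?_, ?_⟩
    · show (if M i j = ⊥ then ((-1 : ℤ) : Zmax) else M i j) ≤ 0
      rw [if_pos hb]
      exact_mod_cast (by omega : (-1:ℤ) ≤ 0)
    · show M i j = 0 ↔ (if M i j = ⊥ then ((-1 : ℤ) : Zmax) else M i j) = 0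
      rw [if_pos hb, hb]
      constructor
      · intro h'; exact absurd h' (by simp)
      · intro h'
        have : (-1 : ℤ) = 0 := by exact_mod_cast h'
        omega

lemma rel_mul {d : ℕ} {A A' B B' : Mat d} (hA : Rel17 A A') (hB : Rel17 B B') :
    Rel17 (tmul A B) (tmul A' B') := by
  intro i j
  have hAe : ∀ k, A i k ≤ 0 := fun k => by rcases (hA i k).1 with h | h <;> simp [h]
  have hBe : ∀ k, B k j ≤ 0 := fun k => by rcases (hB k j).1 with h | h <;> simp [h]
  have hterm : ∀ k, A i k + B k j ≤ 0 := fun k => by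
    simpa using add_nonpos (hAe k) (hBe k)
  have hterm' : ∀ k, A' i k + B' k j ≤ 0 := fun k => by
    simpa using add_nonpos (hA i k).2.1 (hB k j).2.1
  have hiff : tmul A B i j = 0 ↔ tmul A' B' i j = 0 := by
    rw [show tmul A B i j = Finset.univ.sup (fun k => A i k + B k j) from rfl,
      sup_zmax_eq_zero_iff (fun k _ => hterm k),
      show tmul A' B' i j = Finset.univ.sup (fun k => A' i k + B' k j) from rfl,
      sup_zmax_eq_zero_iff (fun k _ => hterm' k)]
    refine exists_congr fun k => ?_
    simp only [Finset.mem_univ, true_and]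
    rw [zmax_add_eq_zero_iff (hAe k) (hBe k),
      zmax_add_eq_zero_iff (hA i k).2.1 (hB k j).2.1]
    exact and_congr (hA i k).2.2 (hB k j).2.2
  refine ⟨?_, Finset.sup_le fun k _ => hterm' k, hiff⟩
  by_cases h0 : tmul A B i j = 0
  · exact Or.inl h0
  · right
    apply le_bot_iff.mp
    apply Finset.sup_le
    intro k _
    rcases (hA i k).1 with h | h
    · rcases (hB k j).1 with h2 | h2
      · exfalso
        apply h0
        rw [show tmul A B i j = Finset.univ.sup (fun k => A i k + B k j) from rfl,
          sup_zmax_eq_zero_iff (fun k _ => hterm k)]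
        exact ⟨k, Finset.mem_univ k, by rw [h, h2, add_zero]⟩
      · simp [h2]
    · simp [h]

lemma rel_prod {d : ℕ} : ∀ (L : List (Mat d)), L ≠ [] →
    (∀ N ∈ L, ∀ i j, N i j = 0 ∨ N i j = ⊥) →
    Rel17 (prodL L) (prodL (L.map fmap17))
  | [], h, _ => absurd rfl h
  | [M], _, hm => by
    simpa [prodL] using rel_base (hm M (by simp))
  | M :: N :: L, _, hm => by
    have ih := rel_prod (N :: L) (by simp)
      (fun K hK => hm K (List.mem_cons_of_mem _ hK))
    exact rel_mul (rel_base (hm M (List.mem_cons_self))) ih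

lemma tnorm_nonpos {d : ℕ} {M : Mat d} (h : ∀ i j, M i j ≤ 0) : tnorm M ≤ 0 :=
  Finset.sup_le fun i _ => Finset.sup_le fun j _ => h i j

lemma tnorm_eq_zero_iff {d : ℕ} {M : Mat d} (h : ∀ i j, M i j ≤ 0) :
    tnorm M = 0 ↔ ∃ i j, M i j = 0 := by
  rw [show tnorm M = Finset.univ.sup (fun i => Finset.univ.sup fun j => M i j) from rfl,
    sup_zmax_eq_zero_iff (fun i _ => Finset.sup_le fun j _ => h i j)]
  constructor
  · rintro ⟨i, -, hi⟩
    obtain ⟨j, -, hj⟩ := (sup_zmax_eq_zero_iff (fun j _ => h i j)).mp hi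
    exact ⟨i, j, hj⟩
  · rintro ⟨i, j, hij⟩
    exact ⟨i, Finset.mem_univ i,
      (sup_zmax_eq_zero_iff (fun j _ => h i j)).mpr ⟨j, Finset.mem_univ j, hij⟩⟩

lemma tnorm_zero_or_bot {d : ℕ} {M : Mat d} (h : ∀ i j, M i j = 0 ∨ M i j = ⊥) :
    tnorm M = 0 ∨ tnorm M = ⊥ := by
  have h0 : ∀ i j, M i j ≤ 0 := fun i j => by rcases h i j with h' | h' <;> simp [h']
  by_cases hh : ∃ i j, M i j = 0
  · exact Or.inl ((tnorm_eq_zero_iff h0).mpr hh)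
  · push_neg at hh
    right
    apply le_bot_iff.mp
    apply Finset.sup_le; intro i _; apply Finset.sup_le; intro j _
    rcases h i j with h' | h'
    · exact absurd h' (hh i j)
    · simp [h']

lemma key17 {d : ℕ} (L : List (Mat d)) (hL : L ≠ [])
    (hm : ∀ N ∈ L, ∀ i j, N i j = 0 ∨ N i j = ⊥) :
    (tnorm (prodL L) = 0 ∨ tnorm (prodL L) = ⊥) ∧
    tnorm (prodL (L.map fmap17)) ≤ 0 ∧
    (tnorm (prodL L) = 0 ↔ tnorm (prodL (L.map fmap17)) = 0) := by
  have hrel := rel_prod L hL hm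
  have hA : ∀ i j, prodL L i j = 0 ∨ prodL L i j = ⊥ := fun i j => (hrel i j).1
  have hA0 : ∀ i j, prodL L i j ≤ 0 := fun i j => by
    rcases hA i j with h | h <;> simp [h]
  have hA'0 : ∀ i j, prodL (L.map fmap17) i j ≤ 0 := fun i j => (hrel i j).2.1
  refine ⟨tnorm_zero_or_bot hA, tnorm_nonpos hA'0, ?_⟩
  rw [tnorm_eq_zero_iff hA0, tnorm_eq_zero_iff hA'0]
  exact exists_congr fun i => exists_congr fun j => (hrel i j).2.2

lemma z2e_bot : z2e ⊥ = ⊥ := rfl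

lemma z2e_coe (n : ℤ) : z2e ((n : ℤ) : Zmax) = ((n : ℝ) : EReal) := rfl

lemma z2e_zero : z2e (0 : Zmax) = 0 := by
  rw [show (0 : Zmax) = ((0 : ℤ) : Zmax) from rfl, z2e_coe]
  norm_num

lemma z2e_mono {x y : Zmax} (h : x ≤ y) : z2e x ≤ z2e y := by
  induction x using WithBot.recBotCoe with
  | bot => rw [z2e_bot]; exact bot_le
  | coe m =>
    induction y using WithBot.recBotCoe with
    | bot => exact absurd h (by simp)
    | coe n =>
      have hmn : m ≤ n := by exact_mod_cast h
      rw [z2e_coe, z2e_coe]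
      exact_mod_cast hmn

lemma ecast_pos {ℓ : ℕ} (h : 0 < ℓ) : (0 : EReal) < (ℓ : EReal) := by
  exact_mod_cast h

lemma minNorm_le17 {d : ℕ} {Γ : Set (Mat d)} {ℓ : ℕ} (L : List (Mat d))
    (h1 : L.length = ℓ) (h2 : ∀ N ∈ L, N ∈ Γ) :
    minNorm Γ ℓ ≤ z2e (tnorm (prodL L)) / (ℓ : EReal) :=
  sInf_le ⟨L, h1, h2, rfl⟩

lemma jsr_le17 {d : ℕ} {Γ : Set (Mat d)} {ℓ : ℕ} (hℓ : 0 < ℓ) :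
    jsr Γ ≤ minNorm Γ ℓ :=
  le_trans (iInf_le _ ℓ) (iInf_le _ hℓ)

lemma minNorm_eq_zero17 {d : ℕ} {Γ : Set (Mat d)} {ℓ : ℕ} (hne : Γ.Nonempty)
    (h : ∀ L : List (Mat d), L.length = ℓ → (∀ N ∈ L, N ∈ Γ) → tnorm (prodL L) = 0) :
    minNorm Γ ℓ = 0 := by
  obtain ⟨M, hM⟩ := hne
  have hmem : ∀ N ∈ List.replicate ℓ M, N ∈ Γ := fun N hN => by
    rw [(List.eq_of_mem_replicate hN : N = M)]; exact hM
  apply le_antisymm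
  · have hl := minNorm_le17 (Γ := Γ) (List.replicate ℓ M) (List.length_replicate) hmem
    rwa [h _ (List.length_replicate) hmem, z2e_zero, EReal.zero_div] at hl
  · apply le_sInf
    rintro x ⟨L, h1, h2, rfl⟩
    rw [h L h1 h2, z2e_zero, EReal.zero_div]

lemma jsr_eq_zero17 {d : ℕ} {Γ : Set (Mat d)}
    (h : ∀ ℓ, 0 < ℓ → minNorm Γ ℓ = 0) : jsr Γ = 0 := by
  apply le_antisymm
  · exact le_trans (jsr_le17 one_pos) (le_of_eq (h 1 one_pos))
  · exact le_iInf fun ℓ => le_iInf fun hℓ => ge_of_eq (h ℓ hℓ)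

lemma jsr_zero_iff17 {d : ℕ} {Γ : Set (Mat d)} (hne : Γ.Nonempty)
    (hΓ : ∀ M ∈ Γ, ∀ i j, M i j = 0 ∨ M i j = ⊥) :
    jsr Γ = 0 ↔ ∀ L : List (Mat d), L ≠ [] → (∀ N ∈ L, N ∈ Γ) →
      tnorm (prodL L) = 0 := by
  constructor
  · intro h0 L hL hm
    rcases (key17 L hL (fun N hN => hΓ N (hm N hN))).1 with h | h
    · exact h
    · exfalso
      have hlen : 0 < L.length := List.length_pos_iff.mpr hL
      have hb : jsr Γ ≤ ⊥ := by
        refine le_trans (jsr_le17 hlen) (le_trans (minNorm_le17 L rfl hm) ?_)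
        rw [h, z2e_bot, EReal.bot_div_of_pos_ne_top (ecast_pos hlen) (EReal.natCast_ne_top _)]
      rw [h0] at hb
      exact absurd (le_bot_iff.mp hb) (by simp)
  · intro h
    apply jsr_eq_zero17
    intro ℓ hℓ
    exact minNorm_eq_zero17 hne fun L h1 h2 =>
      h L (by rintro rfl; rw [List.length_nil] at h1; omega) h2

lemma exists_preimage17 {d : ℕ} (Γ : Set (Mat d)) (L' : List (Mat d))
    (h : ∀ N ∈ L', N ∈ fmap17 '' Γ) :
    ∃ L : List (Mat d), L.map fmap17 = L' ∧ ∀ N ∈ L, N ∈ Γ := by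
  induction L' with
  | nil => exact ⟨[], rfl, by simp⟩
  | cons N' T ih =>
    obtain ⟨L, hm, hmem⟩ := ih fun N hN => h N (List.mem_cons_of_mem _ hN)
    obtain ⟨M, hM, hfM⟩ := h N' (List.mem_cons_self)
    refine ⟨M :: L, by simp [hm, hfM], ?_⟩
    intro N hN
    rcases List.mem_cons.mp hN with rfl | hN
    · exact hM
    · exact hmem N hN

theorem stmt_17 {d : ℕ} (Γ : Set (Mat d)) (hfin : Γ.Finite) (hne : Γ.Nonempty)
    (hΓ : ∀ M ∈ Γ, ∀ i j, M i j = 0 ∨ M i j = ⊥) :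
    (jsr Γ = 0 ↔
      jsr ((fun M : Mat d => fun i j =>
        if M i j = ⊥ then ((-1 : ℤ) : Zmax) else M i j) '' Γ) = 0) ∧
    (jsr Γ ≠ 0 → jsr Γ = ⊥ ∧
      jsr ((fun M : Mat d => fun i j =>
        if M i j = ⊥ then ((-1 : ℤ) : Zmax) else M i j) '' Γ) < 0) := by
  have himg : (fun M : Mat d => fun i j =>
      if M i j = ⊥ then ((-1 : ℤ) : Zmax) else M i j) '' Γ = fmap17 '' Γ := rfl
  rw [himg]
  have part2 : jsr Γ ≠ 0 → jsr Γ = ⊥ ∧ jsr (fmap17 '' Γ) < 0 := by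
    intro hne0
    have hnall : ¬ ∀ L : List (Mat d), L ≠ [] → (∀ N ∈ L, N ∈ Γ) →
        tnorm (prodL L) = 0 := fun h => hne0 ((jsr_zero_iff17 hne hΓ).mpr h)
    push_neg at hnall
    obtain ⟨L, hL, hm, hnz⟩ := hnall
    have hkey := key17 L hL fun N hN => hΓ N (hm N hN)
    have hbot : tnorm (prodL L) = ⊥ := by
      rcases hkey.1 with h | h
      · exact absurd h hnz
      · exact h
    have hlen : 0 < L.length := List.length_pos_iff.mpr hL
    have hlen' : 0 < (L.map fmap17).length := by simpa using hlen
    constructor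
    · apply le_bot_iff.mp
      refine le_trans (jsr_le17 hlen) (le_trans (minNorm_le17 L rfl hm) ?_)
      rw [hbot, z2e_bot,
        EReal.bot_div_of_pos_ne_top (ecast_pos hlen) (EReal.natCast_ne_top _)]
    · have hm' : ∀ N ∈ L.map fmap17, N ∈ fmap17 '' Γ := by
        intro N hN
        obtain ⟨M, hM, rfl⟩ := List.mem_map.mp hN
        exact ⟨M, hm M hM, rfl⟩
      have hle : tnorm (prodL (L.map fmap17)) ≤ ((-1 : ℤ) : Zmax) :=
        zmax_le_neg_one hkey.2.1 fun h => hnz (hkey.2.2.mpr h)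
      calc jsr (fmap17 '' Γ) ≤ minNorm (fmap17 '' Γ) (L.map fmap17).length :=
            jsr_le17 hlen'
        _ ≤ z2e (tnorm (prodL (L.map fmap17))) / ((L.map fmap17).length : EReal) :=
            minNorm_le17 _ rfl hm'
        _ ≤ z2e ((-1 : ℤ) : Zmax) / ((L.map fmap17).length : EReal) :=
            EReal.div_le_div_right_of_nonneg (le_of_lt (ecast_pos hlen')) (z2e_mono hle)
        _ < 0 / ((L.map fmap17).length : EReal) := by
            refine EReal.div_lt_div_right_of_pos (ecast_pos hlen')
              (EReal.natCast_ne_top _) ?_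
            rw [z2e_coe]
            exact_mod_cast (by norm_num : ((-1 : ℤ) : ℝ) < 0)
        _ = 0 := EReal.zero_div
  refine ⟨⟨?_, ?_⟩, part2⟩
  · intro h0
    have hall := (jsr_zero_iff17 hne hΓ).mp h0
    apply jsr_eq_zero17
    intro ℓ hℓ
    apply minNorm_eq_zero17 (hne.image _)
    intro L' h1 h2
    obtain ⟨L, hmap, hmem⟩ := exists_preimage17 Γ L' h2
    have hL : L ≠ [] := by
      rintro rfl
      rw [← hmap, List.map_nil, List.length_nil] at h1
      omega
    rw [← hmap]
    exact (key17 L hL fun N hN => hΓ N (hmem N hN)).2.2.mp (hall L hL hmem)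
  · intro h0'
    by_contra hne0
    exact absurd h0' (ne_of_lt (part2 hne0).2)
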